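/- For every natural number ℓ ≥ 0, the sunlet graph S_n with n = 7 + 4ℓ satisfies r^+_χ(S_n) = n; that is, χ(S_n) = 3 and the maximum, over all proper 3-colourings c of S_n, of the number of vertices yielding a rainbow neighbourhood with respect to c equals n (exactly the n cycle vertices can be made to yield, and no pendant vertex can yield). -/

import Mathlib

open SimpleGraph

/-- A vertex `v` yields a rainbow neighbourhood w.r.t. the colouring `c` if its closed
neighbourhood `N[v]` contains a vertex of every colour class. -/
def yieldsRainbow {V : Type*} {k : ℕ} (G : SimpleGraph V) (c : G.Coloring (Fin k)) (v : V) :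
    Prop :=
  ∀ i : Fin k, ∃ u : V, (u = v ∨ G.Adj v u) ∧ c u = i

/-- The number of vertices yielding a rainbow neighbourhood w.r.t. `c`. -/
noncomputable def rainbowCount {V : Type*} [Fintype V] {k : ℕ} (G : SimpleGraph V)
    (c : G.Coloring (Fin k)) : ℕ :=
  Nat.card {v : V // yieldsRainbow G c v}

/-- The minimum number of vertices yielding a rainbow neighbourhood, over all proper
colourings with exactly `k` colours. -/
noncomputable def rMin {V : Type*} [Fintype V] (G : SimpleGraph V) (k : ℕ) : ℕ :=
  sInf (Set.range fun c : G.Coloring (Fin k) => rainbowCount G c)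

/-- The maximum number of vertices yielding a rainbow neighbourhood, over all proper
colourings with exactly `k` colours. -/
noncomputable def rMax {V : Type*} [Fintype V] (G : SimpleGraph V) (k : ℕ) : ℕ :=
  sSup (Set.range fun c : G.Coloring (Fin k) => rainbowCount G c)


/-- The sunlet graph `S_n` on `2n` vertices: `Sum.inl i` are the cycle vertices
(adjacent as in `C_n`), and `Sum.inr i` is the pendant vertex attached to `Sum.inl i`. -/
def sunletGraph (n : ℕ) : SimpleGraph (Fin n ⊕ Fin n) where
  Adj x y :=
    match x, y with
    | Sum.inl i, Sum.inl j => (SimpleGraph.cycleGraph n).Adj i j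
    | Sum.inl i, Sum.inr j => i = j
    | Sum.inr i, Sum.inl j => i = j
    | Sum.inr _, Sum.inr _ => False
  symm := by
    constructor
    rintro (i | i) (j | j) h <;> simp_all
    all_goals exact (SimpleGraph.cycleGraph n).adj_symm h
  loopless := by
    constructor
    rintro (i | i) h <;> simp_all


lemma sunlet_adj_inl_inl {n : ℕ} {i j : Fin n} :
    (sunletGraph n).Adj (Sum.inl i) (Sum.inl j) ↔ (cycleGraph n).Adj i j := Iff.rfl

lemma sunlet_adj_inl_inr {n : ℕ} {i j : Fin n} :
    (sunletGraph n).Adj (Sum.inl i) (Sum.inr j) ↔ i = j := Iff.rfl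

lemma sunlet_adj_inr_inl {n : ℕ} {i j : Fin n} :
    (sunletGraph n).Adj (Sum.inr i) (Sum.inl j) ↔ i = j := Iff.rfl

lemma sunlet_adj_inr_inr {n : ℕ} {i j : Fin n} :
    ¬ (sunletGraph n).Adj (Sum.inr i) (Sum.inr j) := id

def cyc (n : ℕ) (i : Fin n) : Fin 3 :=
  if (i : ℕ) = n - 1 then 2 else if (i : ℕ) % 2 = 0 then 0 else 1

lemma val_add_one' {n : ℕ} [NeZero n] (i : Fin n) :
    ((i + 1 : Fin n) : ℕ) = ((i : ℕ) + 1) % n := by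
  rw [Fin.val_add, Fin.val_one']
  conv_rhs => rw [Nat.add_mod]
  rw [Nat.mod_eq_of_lt i.isLt]

lemma cyc_ne_succ {n : ℕ} [NeZero n] (hn : 3 ≤ n) (i : Fin n) :
    cyc n i ≠ cyc n (i + 1) := by
  have hv := val_add_one' i
  have hlt := i.isLt
  unfold cyc
  by_cases h1 : (i : ℕ) = n - 1
  · have h0 : ((i + 1 : Fin n) : ℕ) = 0 := by
      have : (i : ℕ) + 1 = n := by omega
      rw [hv, this, Nat.mod_self]
    rw [h0]
    split_ifs <;> first | decide | omega
  · have h0 : ((i + 1 : Fin n) : ℕ) = (i : ℕ) + 1 := by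
      rw [hv, Nat.mod_eq_of_lt (by omega)]
    rw [h0]
    split_ifs <;> first | decide | omega

lemma fin3_facts : ∀ a b : Fin 3, a ≠ b →
    (a ≠ -(a + b) ∧ b ≠ -(a + b) ∧ ∀ t : Fin 3, t = a ∨ t = b ∨ t = -(a + b)) := by decide

lemma eq_add_one_of_sub {n : ℕ} [NeZero n] (hn : 3 ≤ n) {u v : Fin n}
    (h : ((v - u : Fin n) : ℕ) = 1) : v = u + 1 := by
  have h1 : v - u = 1 := Fin.ext (by rw [h, Fin.val_one']; exact (Nat.mod_eq_of_lt (by omega)).symm)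
  have h2 := sub_eq_iff_eq_add.mp h1
  exact h2.trans (add_comm _ _)

def pend (n : ℕ) [NeZero n] (i : Fin n) : Fin 3 := -(cyc n i + cyc n (i + 1))

def sunletCol (n : ℕ) [NeZero n] : Fin n ⊕ Fin n → Fin 3 := Sum.elim (cyc n) (pend n)

lemma adj_succ {n : ℕ} [NeZero n] (hn : 3 ≤ n) (i : Fin n) : (cycleGraph n).Adj i (i + 1) := by
  rw [cycleGraph_adj']
  right
  rw [add_sub_cancel_left, Fin.val_one']
  exact Nat.mod_eq_of_lt (by omega)

def sunletColoring (n : ℕ) (hn : 3 ≤ n) : (sunletGraph n).Coloring (Fin 3) := by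
  haveI : NeZero n := ⟨by omega⟩
  refine Coloring.mk (sunletCol n) ?_
  rintro (i | i) (j | j) hadj <;>
    simp only [sunletCol, Sum.elim_inl, Sum.elim_inr, pend]
  · rw [sunlet_adj_inl_inl, cycleGraph_adj'] at hadj
    rcases hadj with h | h
    · have := eq_add_one_of_sub hn h
      subst this
      exact (cyc_ne_succ hn j).symm
    · have := eq_add_one_of_sub hn h
      subst this
      exact cyc_ne_succ hn i
  · rw [sunlet_adj_inl_inr] at hadj
    subst hadj
    exact (fin3_facts _ _ (cyc_ne_succ hn i)).1
  · rw [sunlet_adj_inr_inl] at hadj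
    subst hadj
    exact (fin3_facts _ _ (cyc_ne_succ hn i)).1.symm
  · exact absurd hadj (sunlet_adj_inr_inr)

lemma sunletColoring_apply_inl {n : ℕ} (hn : 3 ≤ n) (i : Fin n) :
    sunletColoring n hn (Sum.inl i) = cyc n i := rfl

lemma sunletColoring_apply_inr {n : ℕ} (hn : 3 ≤ n) (i : Fin n) :
    haveI : NeZero n := ⟨by omega⟩
    sunletColoring n hn (Sum.inr i) = pend n i := rfl

lemma inl_rainbow {n : ℕ} (hn : 3 ≤ n) (i : Fin n) :
    yieldsRainbow (sunletGraph n) (sunletColoring n hn) (Sum.inl i) := by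
  haveI : NeZero n := ⟨by omega⟩
  intro t
  rcases (fin3_facts _ _ (cyc_ne_succ hn i)).2.2 t with h | h | h
  · exact ⟨Sum.inl i, Or.inl rfl, h.symm⟩
  · exact ⟨Sum.inl (i + 1), Or.inr (sunlet_adj_inl_inl.mpr (adj_succ hn i)), h.symm⟩
  · exact ⟨Sum.inr i, Or.inr (sunlet_adj_inl_inr.mpr rfl), h.symm⟩

lemma pendant_not_rainbow {n : ℕ} (c : (sunletGraph n).Coloring (Fin 3)) (j : Fin n) :
    ¬ yieldsRainbow (sunletGraph n) c (Sum.inr j) := by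
  intro h
  obtain ⟨u0, hu0, hc0⟩ := h 0
  obtain ⟨u1, hu1, hc1⟩ := h 1
  obtain ⟨u2, hu2, hc2⟩ := h 2
  have H : ∀ u : Fin n ⊕ Fin n,
      (u = Sum.inr j ∨ (sunletGraph n).Adj (Sum.inr j) u) → u = Sum.inr j ∨ u = Sum.inl j := by
    rintro (k | k) (h | h)
    · exact Or.inr (by simpa using h.symm)
    · exact Or.inr (by rw [sunlet_adj_inr_inl] at h; rw [h])
    · exact Or.inl h
    · exact absurd h sunlet_adj_inr_inr
  rcases H u0 hu0 with h0 | h0 <;> rcases H u1 hu1 with h1 | h1 <;>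
    rcases H u2 hu2 with h2 | h2 <;> subst h0 <;> subst h1 <;> subst h2 <;> simp_all

lemma rainbowCount_le {n : ℕ} (c : (sunletGraph n).Coloring (Fin 3)) :
    rainbowCount (sunletGraph n) c ≤ n := by
  have hinj : Function.Injective
      (fun v : {v : Fin n ⊕ Fin n // yieldsRainbow (sunletGraph n) c v} =>
        Sum.elim id id v.1) := by
    rintro ⟨(i | i), hi⟩ ⟨(k | k), hk⟩ h
    · simp only [Sum.elim_inl, id] at h
      simpa using h
    · exact absurd hk (pendant_not_rainbow c k)
    · exact absurd hi (pendant_not_rainbow c i)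
    · exact absurd hk (pendant_not_rainbow c k)
  calc rainbowCount (sunletGraph n) c ≤ Nat.card (Fin n) :=
        Nat.card_le_card_of_injective _ hinj
    _ = n := by simp

lemma le_rainbowCount {n : ℕ} (hn : 3 ≤ n) :
    n ≤ rainbowCount (sunletGraph n) (sunletColoring n hn) := by
  have hinj : Function.Injective
      (fun i : Fin n =>
        (⟨Sum.inl i, inl_rainbow hn i⟩ :
          {v : Fin n ⊕ Fin n // yieldsRainbow (sunletGraph n) (sunletColoring n hn) v})) := by
    intro i k h
    simpa using congrArg Subtype.val h
  calc n = Nat.card (Fin n) := by simp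
    _ ≤ _ := Nat.card_le_card_of_injective _ hinj

open Fin.NatCast in
lemma not_colorable_two {n : ℕ} (hn : 3 ≤ n) (hodd : n % 2 = 1) :
    ¬ (sunletGraph n).Colorable 2 := by
  haveI : NeZero n := ⟨by omega⟩
  rintro ⟨c⟩
  set f : Fin n → Fin 2 := fun i => c (Sum.inl i) with hf
  have hstep : ∀ i : Fin n, f (i + 1) = f i + 1 := by
    intro i
    have hne := c.valid (sunlet_adj_inl_inl.mpr (adj_succ hn i))
    have d2 : ∀ a b : Fin 2, a ≠ b → b = a + 1 := by decide
    exact d2 _ _ hne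
  have key : ∀ k : ℕ, f ((k : Fin n)) = f 0 + (k : Fin 2) := by
    intro k
    induction k with
    | zero => simp
    | succ m ih =>
      have hcast : ((m + 1 : ℕ) : Fin n) = ((m : ℕ) : Fin n) + 1 := by push_cast; ring
      rw [hcast, hstep, ih]
      push_cast
      rw [add_assoc]
  have h1 := key n
  rw [Fin.natCast_self] at h1
  have h2 : ((n : ℕ) : Fin 2) = 1 := by
    apply Fin.ext
    rw [Fin.val_natCast]
    omega
  rw [h2] at h1
  simp at h1

lemma sunlet_chromatic {n : ℕ} (hn : 3 ≤ n) (hodd : n % 2 = 1) :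
    (sunletGraph n).chromaticNumber = 3 := by
  have hc3 : (sunletGraph n).Colorable 3 := ⟨sunletColoring n hn⟩
  rw [hc3.chromaticNumber_eq_sInf]
  have : sInf {n' : ℕ | (sunletGraph n).Colorable n'} = 3 := by
    have hmem : 3 ∈ {n' : ℕ | (sunletGraph n).Colorable n'} := hc3
    apply le_antisymm (Nat.sInf_le hmem)
    apply le_csInf ⟨3, hmem⟩
    intro m hm
    have hm' : (sunletGraph n).Colorable m := hm
    by_contra hlt
    exact not_colorable_two hn hodd (hm'.mono (by omega))
  rw [this]
  rfl


/-- For `n = 7 + 4ℓ`, the sunlet graph `S_n` has `χ = 3` and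
`r⁺_χ(S_n) = n`: some proper 3-colouring makes all `n` cycle vertices yield rainbow
neighbourhoods, while no pendant vertex ever yields one. -/
theorem rMax_sunlet_seven_plus (ℓ : ℕ) :
    (sunletGraph (7 + 4 * ℓ)).chromaticNumber = 3 ∧
      rMax (sunletGraph (7 + 4 * ℓ)) 3 = 7 + 4 * ℓ ∧
      (∃ c : (sunletGraph (7 + 4 * ℓ)).Coloring (Fin 3),
        ∀ i : Fin (7 + 4 * ℓ), yieldsRainbow (sunletGraph (7 + 4 * ℓ)) c (Sum.inl i)) ∧
      (∀ c : (sunletGraph (7 + 4 * ℓ)).Coloring (Fin 3),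
        ∀ j : Fin (7 + 4 * ℓ), ¬ yieldsRainbow (sunletGraph (7 + 4 * ℓ)) c (Sum.inr j)) := by
  set n := 7 + 4 * ℓ with hne
  have hn : 3 ≤ n := by omega
  have hodd : n % 2 = 1 := by omega
  refine ⟨sunlet_chromatic hn hodd, ?_, ⟨sunletColoring n hn, inl_rainbow hn⟩,
    fun c j => pendant_not_rainbow c j⟩
  have hub : ∀ x ∈ Set.range (fun c : (sunletGraph n).Coloring (Fin 3) =>
      rainbowCount (sunletGraph n) c), x ≤ n := by
    rintro x ⟨c, rfl⟩
    exact rainbowCount_le c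
  apply le_antisymm
  · exact csSup_le ⟨_, ⟨sunletColoring n hn, rfl⟩⟩ hub
  · exact le_trans (le_rainbowCount hn)
      (le_csSup ⟨n, hub⟩ ⟨sunletColoring n hn, rfl⟩)
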